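/- Let φ be an entire function with |φ(0)| < 1, and let M(r) = sup{|φ(z)| : |z| = r}. Suppose M(r₁) > 1 for some r₁. Then for every ρ ∈ (0,1) there exists w₀ ∈ ℂ with |φ(w₀)| > 1 and |φ(r·w₀)| < 1 for all r ∈ (0, ρ]. -/

import Mathlib

open Metric

theorem small_eigen_direction (φ : ℂ → ℂ) (hφ : Differentiable ℂ φ)
    (h0 : ‖φ 0‖ < 1)
    (hM : ∃ r₁ : ℝ, 1 < sSup ((fun z => ‖φ z‖) '' sphere (0:ℂ) r₁)) :
    ∀ ρ : ℝ, 0 < ρ → ρ < 1 →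
      ∃ w₀ : ℂ, 1 < ‖φ w₀‖ ∧
        ∀ r : ℝ, 0 < r → r ≤ ρ → ‖φ ((r : ℂ) * w₀)‖ < 1 := by
  intro ρ hρ0 hρ1
  obtain ⟨r₁, hr₁⟩ := hM
  -- find a point z₁ on the sphere with |φ z₁| > 1
  have hsne : (sphere (0:ℂ) r₁).Nonempty := by
    by_contra h
    rw [Set.not_nonempty_iff_eq_empty] at h
    rw [h, Set.image_empty, Real.sSup_empty] at hr₁
    linarith
  obtain ⟨z₁, hz₁mem, hz₁max⟩ := (isCompact_sphere (0:ℂ) r₁).exists_isMaxOn hsne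
    (continuous_norm.comp hφ.continuous).continuousOn
  have hz₁ : 1 < ‖φ z₁‖ := by
    refine lt_of_lt_of_le hr₁ (csSup_le (hsne.image _) ?_)
    rintro x ⟨z, hz, rfl⟩
    exact hz₁max hz
  have hφc : Continuous φ := hφ.continuous
  -- f s = |φ (s z₁)|
  set f : ℝ → ℝ := fun s => ‖φ ((s : ℂ) * z₁)‖ with hf
  have hfc : Continuous f := by
    exact continuous_norm.comp (hφc.comp (by continuity))
  have hf0 : f 0 = ‖φ 0‖ := by simp [hf]
  have hf1 : f 1 = ‖φ z₁‖ := by simp [hf]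
  set S : Set ℝ := Set.Icc 0 1 ∩ f ⁻¹' Set.Ici 1 with hS
  have hSne : S.Nonempty := ⟨1, ⟨by norm_num, le_refl 1⟩, by simp [hf1]; linarith⟩
  have hSc : IsClosed S := isClosed_Icc.inter (isClosed_Ici.preimage hfc)
  have hSbdd : BddBelow S := ⟨0, fun x hx => hx.1.1⟩
  set t := sInf S with ht
  have htS : t ∈ S := hSc.csInf_mem hSne hSbdd
  have ht0 : 0 < t := by
    rcases lt_or_eq_of_le htS.1.1 with h | h
    · exact h
    · exfalso; have := htS.2; rw [← h] at this
      simp only [Set.mem_preimage, Set.mem_Ici] at this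
      rw [hf0] at this; linarith
  have hlt : ∀ s : ℝ, 0 ≤ s → s < t → f s < 1 := by
    intro s hs0 hst
    by_contra h
    push_neg at h
    have hsS : s ∈ S := ⟨⟨hs0, le_trans hst.le htS.1.2⟩, h⟩
    exact absurd (csInf_le hSbdd hsS) (not_le.mpr hst)
  have hft : 1 ≤ f t := htS.2
  -- |z₁| = r₁ > 0
  have hr₁0 : 0 < ‖z₁‖ := by
    rcases eq_or_lt_of_le (norm_nonneg z₁) with h | h
    · exfalso
      have : z₁ = 0 := by
        have := h.symm
        rwa [norm_eq_zero] at this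
      rw [this] at hz₁; linarith
    · exact h
  -- the compact segment K = {s z₁ : s ∈ [0, ρ t]} lies in the open set {|φ| < 1}
  set U : Set ℂ := {w | ‖φ w‖ < 1} with hU
  have hUopen : IsOpen U := isOpen_lt (continuous_norm.comp hφc) continuous_const
  set K : Set ℂ := (fun s : ℝ => (s : ℂ) * z₁) '' Set.Icc 0 (ρ * t) with hK
  have hKcomp : IsCompact K := (isCompact_Icc).image (by continuity)
  have hKU : K ⊆ U := by
    rintro w ⟨s, ⟨hs0, hs1⟩, rfl⟩
    exact hlt s hs0 (lt_of_le_of_lt hs1 (by nlinarith))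
  obtain ⟨δ, hδ0, hδ⟩ := hKcomp.exists_thickening_subset_open hUopen hKU
  -- find w₀ near t z₁ with |φ w₀| > 1
  have hnear : ∃ w₀ : ℂ, dist w₀ ((t : ℂ) * z₁) < δ ∧ 1 < ‖φ w₀‖ := by
    rcases lt_or_eq_of_le hft with hgt | heq
    · exact ⟨(t : ℂ) * z₁, by simpa using hδ0, hgt⟩
    · -- f t = 1; use the maximum modulus principle on a small ball
      by_contra h
      push_neg at h
      set c : ℂ := (t : ℂ) * z₁ with hc
      have hmax : IsMaxOn (norm ∘ φ) (ball c δ) c := by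
        intro w hw
        simp only [Function.comp_apply, Set.mem_setOf_eq]
        have h1 : ‖φ w‖ ≤ 1 := h w (by simpa [dist_comm] using mem_ball.mp hw)
        have h2 : ‖φ c‖ = 1 := heq.symm
        rw [h2]; exact h1
      have heqOn := Complex.norm_eqOn_of_isPreconnected_of_isMaxOn
        (convex_ball c δ).isPreconnected isOpen_ball hφ.differentiableOn
        (mem_ball_self hδ0) hmax
      -- pick s < t with s z₁ ∈ ball c δ
      set s : ℝ := max (t / 2) (t - δ / (2 * ‖z₁‖)) with hs
      have hst : s < t := by
        apply max_lt (by linarith)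
        have : 0 < δ / (2 * ‖z₁‖) := by positivity
        linarith
      have hs0 : 0 ≤ s := le_trans (by linarith) (le_max_left _ _)
      have hsball : (s : ℂ) * z₁ ∈ ball c δ := by
        rw [mem_ball, hc]
        have : dist ((s : ℂ) * z₁) ((t : ℂ) * z₁) = |s - t| * ‖z₁‖ := by
          rw [dist_eq_norm]
          have : (s : ℂ) * z₁ - (t : ℂ) * z₁ = ((s - t : ℝ) : ℂ) * z₁ := by push_cast; ring
          rw [this, norm_mul, Complex.norm_real, Real.norm_eq_abs]
        rw [this]
        have h1 : |s - t| = t - s := by rw [abs_sub_comm, abs_of_nonneg (by linarith)]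
        rw [h1]
        have h2 : t - s ≤ δ / (2 * ‖z₁‖) := by
          have := le_max_right (t / 2) (t - δ / (2 * ‖z₁‖))
          linarith [this]
        calc (t - s) * ‖z₁‖ ≤ δ / (2 * ‖z₁‖) * ‖z₁‖ := by
              exact mul_le_mul_of_nonneg_right h2 (norm_nonneg z₁)
          _ = δ / 2 := by field_simp
          _ < δ := by linarith
      have := heqOn hsball
      simp only [Function.comp_apply, Function.const_apply] at this
      have hfs : ‖φ ((s:ℂ) * z₁)‖ < 1 := hlt s hs0 hst
      have h2 : ‖φ c‖ = 1 := heq.symm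
      rw [h2] at this
      linarith
  obtain ⟨w₀, hw₀d, hw₀⟩ := hnear
  refine ⟨w₀, hw₀, fun r hr0 hrρ => ?_⟩
  have hmem : (r : ℂ) * w₀ ∈ thickening δ K := by
    rw [mem_thickening_iff]
    refine ⟨(((r * t : ℝ)) : ℂ) * z₁, ⟨r * t, ⟨by positivity, by nlinarith⟩, rfl⟩, ?_⟩
    have hd : dist ((r : ℂ) * w₀) (((r * t : ℝ) : ℂ) * z₁) = r * dist w₀ ((t : ℂ) * z₁) := by
      rw [dist_eq_norm, dist_eq_norm]
      have : (r : ℂ) * w₀ - ((r * t : ℝ) : ℂ) * z₁ = (r : ℂ) * (w₀ - (t : ℂ) * z₁) := by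
        push_cast; ring
      rw [this, norm_mul]
      simp [abs_of_nonneg hr0.le]
    rw [hd]
    calc r * dist w₀ ((t : ℂ) * z₁) ≤ 1 * dist w₀ ((t : ℂ) * z₁) := by
          apply mul_le_mul_of_nonneg_right (by linarith) dist_nonneg
      _ < δ := by rw [one_mul]; exact hw₀d
  exact hδ hmem
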